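/- The number of minimum [1,2]-sets of a tree on n vertices is not polynomially bounded in n: for all natural numbers C and d there exists k ≥ 1 such that the spider tree T_k (a tree on n = 3k+1 vertices) has more than C · (3k+1)^d distinct [1,2]-sets of minimum cardinality. -/

import Mathlib

open scoped Classical

/-- Boolean adjacency of the spider tree `T_k`: root `none`, and branch
vertices `some (i, 0) = a_i`, `some (i, 1) = b_i`, `some (i, 2) = c_i`,
with edges `r–a_i`, `a_i–b_i`, `b_i–c_i`. -/
def spiderAdj (k : ℕ) : Option (Fin k × Fin 3) → Option (Fin k × Fin 3) → Bool
  | none, some (_, j) => decide (j = 0)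
  | some (_, j), none => decide (j = 0)
  | some (i, j), some (i', j') =>
      decide (i = i') && (decide ((j : ℕ) + 1 = (j' : ℕ)) || decide ((j' : ℕ) + 1 = (j : ℕ)))
  | none, none => false

/-- The spider tree `T_k` on `3k+1` vertices. -/
def spider (k : ℕ) : SimpleGraph (Option (Fin k × Fin 3)) where
  Adj x y := spiderAdj k x y = true
  symm := by
    constructor
    rintro (_ | ⟨i, j⟩) (_ | ⟨i', j'⟩) h <;> simp [spiderAdj] at h ⊢
    · exact h
    · exact h
    · exact ⟨h.1.symm, h.2.symm⟩
  loopless := by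
    constructor
    rintro (_ | ⟨i, j⟩) h <;> simp [spiderAdj] at h

instance (k : ℕ) : DecidableRel (spider k).Adj :=
  fun x y => inferInstanceAs (Decidable (spiderAdj k x y = true))

/-- `S` is a `[1,2]`-set of `G`: every vertex outside `S` has at least one and
at most two neighbors in `S`. -/
def IsOneTwoSet {V : Type*} [Fintype V] [DecidableEq V] (G : SimpleGraph V)
    [DecidableRel G.Adj] (S : Finset V) : Prop :=
  ∀ v, v ∉ S → 1 ≤ (G.neighborFinset v ∩ S).card ∧ (G.neighborFinset v ∩ S).card ≤ 2


lemma nbhdA {k : ℕ} (i : Fin k) :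
    (spider k).neighborFinset (some (i, 0)) = {none, some (i, 1)} := by
  ext x
  rcases x with _ | ⟨i', j'⟩ <;>
    simp only [SimpleGraph.mem_neighborFinset] <;>
    simp [spider, spiderAdj, Fin.ext_iff, Prod.ext_iff, -Fin.val_eq_zero_iff] <;>
    omega


lemma nbhdB {k : ℕ} (i : Fin k) :
    (spider k).neighborFinset (some (i, 1)) = {some (i, 0), some (i, 2)} := by
  ext x
  rcases x with _ | ⟨i', j'⟩ <;>
    simp only [SimpleGraph.mem_neighborFinset] <;>
    simp [spider, spiderAdj, Fin.ext_iff, Prod.ext_iff, -Fin.val_eq_zero_iff] <;>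
    omega


lemma nbhdC {k : ℕ} (i : Fin k) :
    (spider k).neighborFinset (some (i, 2)) = {some (i, 1)} := by
  ext x
  rcases x with _ | ⟨i', j'⟩ <;>
    simp only [SimpleGraph.mem_neighborFinset] <;>
    simp [spider, spiderAdj, Fin.ext_iff, Prod.ext_iff, -Fin.val_eq_zero_iff] <;>
    omega
lemma adj_c {k : ℕ} {i : Fin k} {x} (h : (spider k).Adj (some (i, 2)) x) :
    x = some (i, 1) := by
  have := nbhdC i
  have hx : x ∈ (spider k).neighborFinset (some (i,2)) := by
    simpa [SimpleGraph.mem_neighborFinset] using h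
  rw [this] at hx
  simpa using hx

lemma adj_none {k : ℕ} {x} (h : (spider k).Adj none x) :
    ∃ i : Fin k, x = some (i, 0) := by
  rcases x with _ | ⟨i', j'⟩
  · simp [spider, spiderAdj] at h
  · simp only [spider, spiderAdj, decide_eq_true_eq] at h
    exact ⟨i', by rw [h]⟩
/-- Every `[1,2]`-set of the spider has at least `k+1` elements. -/
lemma min_card {k : ℕ} (S : Finset (Option (Fin k × Fin 3)))
    (h : IsOneTwoSet (spider k) S) : k + 1 ≤ S.card := by
  classical
  set g : Fin k → Option (Fin k × Fin 3) :=
    fun i => if some (i, 2) ∈ S then some (i, 2) else some (i, 1) with hg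
  have hgS : ∀ i, g i ∈ S := by
    intro i
    by_cases hc : some (i, 2) ∈ S
    · simp [hg, hc]
    · have h1 := (h _ hc).1
      obtain ⟨x, hx⟩ := Finset.card_pos.mp h1
      rw [Finset.mem_inter, SimpleGraph.mem_neighborFinset] at hx
      have := adj_c hx.1
      subst this
      simp [hg, hc, hx.2]
  have hginj : Function.Injective g := by
    intro i i' hii
    simp only [hg] at hii
    split_ifs at hii <;> simp_all
  set T : Finset (Option (Fin k × Fin 3)) := Finset.univ.image g with hT
  have hTS : T ⊆ S := by
    intro x hx
    simp only [hT, Finset.mem_image] at hx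
    obtain ⟨i, _, rfl⟩ := hx
    exact hgS i
  have hTcard : T.card = k := by
    rw [hT, Finset.card_image_of_injective _ hginj]
    simp
  have hTj : ∀ i : Fin k, some (i, 0) ∉ T := by
    intro i hi
    simp only [hT, Finset.mem_image] at hi
    obtain ⟨i', _, hi'⟩ := hi
    simp only [hg] at hi'
    split_ifs at hi' <;> simp_all
  obtain ⟨e, heS, heT⟩ : ∃ e, e ∈ S ∧ e ∉ T := by
    by_cases hr : none ∈ S
    · refine ⟨none, hr, ?_⟩
      simp only [hT, Finset.mem_image]
      rintro ⟨i, -, hi⟩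
      simp only [hg] at hi
      split_ifs at hi <;> simp_all
    · have h1 := (h _ hr).1
      obtain ⟨x, hx⟩ := Finset.card_pos.mp h1
      rw [Finset.mem_inter, SimpleGraph.mem_neighborFinset] at hx
      obtain ⟨i, rfl⟩ := adj_none hx.1
      exact ⟨_, hx.2, hTj i⟩
  have : insert e T ⊆ S := Finset.insert_subset heS hTS
  calc k + 1 = (insert e T).card := by rw [Finset.card_insert_of_notMem heT, hTcard]
    _ ≤ S.card := Finset.card_le_card this
/-- The candidate minimum `[1,2]`-set determined by a choice `f`. -/
def Ff {k : ℕ} (f : Fin k → Fin 2) : Finset (Option (Fin k × Fin 3)) :=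
  insert none (Finset.univ.image fun i => some (i, (f i).succ))

lemma mem_Ff {k : ℕ} (f : Fin k → Fin 2) (i : Fin k) (j : Fin 3) :
    some (i, j) ∈ Ff f ↔ j = (f i).succ := by
  simp only [Ff, Finset.mem_insert, Finset.mem_image, Finset.mem_univ, true_and]
  constructor
  · rintro (h | ⟨i', h⟩)
    · simp at h
    · simp only [Option.some.injEq, Prod.mk.injEq] at h
      obtain ⟨rfl, rfl⟩ := h
      rfl
  · rintro rfl
    exact Or.inr ⟨i, rfl⟩

lemma card_Ff {k : ℕ} (f : Fin k → Fin 2) : (Ff f).card = k + 1 := by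
  rw [Ff, Finset.card_insert_of_notMem (by simp), Finset.card_image_of_injective,
    Finset.card_univ, Fintype.card_fin]
  intro i i' h
  simp only [Option.some.injEq, Prod.mk.injEq] at h
  exact h.1

lemma Ff_injective {k : ℕ} : Function.Injective (Ff (k := k)) := by
  intro f g hfg
  funext i
  have h1 : some (i, (f i).succ) ∈ Ff g := by
    rw [← hfg, mem_Ff]
  rw [mem_Ff] at h1
  exact (Fin.succ_injective 2) h1

lemma isOneTwo_Ff {k : ℕ} (f : Fin k → Fin 2) : IsOneTwoSet (spider k) (Ff f) := by
  intro v hv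
  rcases v with _ | ⟨i, j⟩
  · exact absurd (Finset.mem_insert_self _ _) hv
  rw [mem_Ff] at hv
  fin_cases j
  · refine ⟨Finset.card_pos.mpr ⟨none, ?_⟩, ?_⟩
    · simp [nbhdA, Ff]
    · calc ((spider k).neighborFinset (some (i, 0)) ∩ Ff f).card
          ≤ ({none, some (i, 1)} : Finset (Option (Fin k × Fin 3))).card := by
            rw [← nbhdA]; exact Finset.card_le_card Finset.inter_subset_left
      _ ≤ 2 := (Finset.card_insert_le _ _).trans (by simp)
  · have hfi : (f i).succ = 2 := by
      simp only [Fin.ext_iff, Fin.val_succ, show ((2:Fin 3):ℕ) = 2 from rfl, show ((1:Fin 3):ℕ) = 1 from rfl] at hv ⊢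
      have := (f i).isLt
      omega
    refine ⟨Finset.card_pos.mpr ⟨some (i, 2), ?_⟩, ?_⟩
    · exact Finset.mem_inter.mpr ⟨by simp [nbhdB], (mem_Ff f i 2).mpr hfi.symm⟩
    · calc ((spider k).neighborFinset (some (i, 1)) ∩ Ff f).card
          ≤ ({some (i, 0), some (i, 2)} : Finset (Option (Fin k × Fin 3))).card := by
            rw [← nbhdB]; exact Finset.card_le_card Finset.inter_subset_left
      _ ≤ 2 := (Finset.card_insert_le _ _).trans (by simp)
  · have hfi : (f i).succ = 1 := by
      simp only [Fin.ext_iff, Fin.val_succ, show ((2:Fin 3):ℕ) = 2 from rfl, show ((1:Fin 3):ℕ) = 1 from rfl] at hv ⊢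
      have := (f i).isLt
      omega
    refine ⟨Finset.card_pos.mpr ⟨some (i, 1), ?_⟩, ?_⟩
    · exact Finset.mem_inter.mpr ⟨by simp [nbhdC], (mem_Ff f i 1).mpr hfi.symm⟩
    · calc ((spider k).neighborFinset (some (i, 2)) ∩ Ff f).card
          ≤ ({some (i, 1)} : Finset (Option (Fin k × Fin 3))).card := by
            rw [← nbhdC]; exact Finset.card_le_card Finset.inter_subset_left
      _ ≤ 2 := by simp

lemma card_bound (k : ℕ) :
    2 ^ k ≤ (Finset.univ.filter
        (fun S : Finset (Option (Fin k × Fin 3)) =>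
          IsOneTwoSet (spider k) S ∧
          ∀ S' : Finset (Option (Fin k × Fin 3)),
            IsOneTwoSet (spider k) S' → S.card ≤ S'.card)).card := by
  classical
  have hmem : ∀ f ∈ (Finset.univ : Finset (Fin k → Fin 2)),
      Ff f ∈ (Finset.univ.filter
        (fun S : Finset (Option (Fin k × Fin 3)) =>
          IsOneTwoSet (spider k) S ∧
          ∀ S' : Finset (Option (Fin k × Fin 3)),
            IsOneTwoSet (spider k) S' → S.card ≤ S'.card)) := by
    intro f _
    rw [Finset.mem_filter]
    refine ⟨Finset.mem_univ _, isOneTwo_Ff f, fun S' hS' => ?_⟩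
    rw [card_Ff]
    exact min_card S' hS'
  have h := Finset.card_le_card_of_injOn Ff hmem (fun a _ b _ hab => Ff_injective hab)
  rw [Finset.card_univ] at h
  simpa using h
lemma growth (C d : ℕ) : ∃ k : ℕ, 1 ≤ k ∧ C * (3 * k + 1) ^ d < 2 ^ k := by
  set A := C * 4 ^ d with hA
  set m := A * (d + 1) ^ d + 1 with hm
  refine ⟨(d + 1) * m, Nat.one_le_iff_ne_zero.mpr (by positivity), ?_⟩
  set k := (d + 1) * m with hk
  have hk1 : 1 ≤ k := Nat.one_le_iff_ne_zero.mpr (by positivity)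
  have h1 : C * (3 * k + 1) ^ d ≤ A * k ^ d := by
    calc C * (3 * k + 1) ^ d ≤ C * (4 * k) ^ d :=
          Nat.mul_le_mul_left _ (Nat.pow_le_pow_left (by omega) d)
      _ = A * k ^ d := by rw [hA, mul_pow]; ring
  have h2 : A * k ^ d = A * (d + 1) ^ d * m ^ d := by rw [hk, mul_pow]; ring
  have h3 : A * (d + 1) ^ d * m ^ d < 2 ^ m * m ^ d := by
    have hmpos : 0 < m ^ d := by positivity
    have : A * (d + 1) ^ d < 2 ^ m := by
      calc A * (d + 1) ^ d < m := by omega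
        _ < 2 ^ m := Nat.lt_two_pow_self
    exact (Nat.mul_lt_mul_right hmpos).mpr this
  have h4 : 2 ^ m * m ^ d ≤ 2 ^ k := by
    calc 2 ^ m * m ^ d ≤ 2 ^ m * (2 ^ m) ^ d :=
          Nat.mul_le_mul_left _ (Nat.pow_le_pow_left (Nat.lt_two_pow_self).le d)
      _ = 2 ^ (m * (d + 1)) := by rw [pow_mul, pow_succ]; ring
      _ = 2 ^ k := by rw [hk, Nat.mul_comm]
  omega

theorem num_min_oneTwoSets_not_poly_bounded (C d : ℕ) :
    ∃ k : ℕ, 1 ≤ k ∧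
      C * (3 * k + 1) ^ d <
        (Finset.univ.filter
          (fun S : Finset (Option (Fin k × Fin 3)) =>
            IsOneTwoSet (spider k) S ∧
            ∀ S' : Finset (Option (Fin k × Fin 3)),
              IsOneTwoSet (spider k) S' → S.card ≤ S'.card)).card := by
  obtain ⟨k, hk1, hk2⟩ := growth C d
  exact ⟨k, hk1, lt_of_lt_of_le hk2 (card_bound k)⟩
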